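/- arXiv:0911.2229 — 5 statements merged into one kernel-verified Lean document; each statement's English description precedes it below -/
import Mathlib

section
/- Let θ > 0 and λ ∈ ℝ. Suppose η : ℝ × ℝ → ℝ is twice continuously differentiable and satisfies the free backward heat equation θ² ∂η/∂t (t,q) = -(θ⁴/2) ∂²η/∂q² (t,q) for all (t,q) ∈ ℝ × ℝ. Define η^V(t,q) = exp(-λ² t³/(6θ²)) · exp(λ t q/θ²) · η(t, q - λ t²/2). Then η^V satisfies the backward heat equation with linear potential V(q) = λq, namely θ² ∂η^V/∂t (t,q) = -(θ⁴/2) ∂²η^V/∂q² (t,q) + λ q · η^V(t,q) for all (t,q) ∈ ℝ × ℝ. -/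
/-- Partial derivative in the first (time) variable of a function of two real variables. -/
noncomputable def partialT (f : ℝ × ℝ → ℝ) (t q : ℝ) : ℝ :=
  deriv (fun s => f (s, q)) t

/-- Partial derivative in the second (space) variable of a function of two real variables. -/
noncomputable def partialQ (f : ℝ × ℝ → ℝ) (t q : ℝ) : ℝ :=
  deriv (fun r => f (t, r)) q

/-- Second partial derivative in the second (space) variable. -/
noncomputable def partialQQ (f : ℝ × ℝ → ℝ) (t q : ℝ) : ℝ :=
  deriv (fun r => partialQ f t r) q

/-- from a `C²` solution `η` of the free backward heat equation
`θ² η_t = -(θ⁴/2) η_qq`, the function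
`η^V(t,q) = exp(-λ²t³/(6θ²)) exp(λtq/θ²) η(t, q - λt²/2)`
solves the backward heat equation with linear potential `V(q) = λq`. -/
theorem heat_linear_potential (θ : ℝ) (hθ : 0 < θ) (lam : ℝ) (η : ℝ × ℝ → ℝ)
    (hη : ContDiff ℝ 2 η)
    (hfree : ∀ t q : ℝ, θ ^ 2 * partialT η t q = -(θ ^ 4 / 2) * partialQQ η t q)
    (ηV : ℝ × ℝ → ℝ)
    (hηV : ∀ t q : ℝ,
      ηV (t, q) = Real.exp (-lam ^ 2 * t ^ 3 / (6 * θ ^ 2)) *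
        Real.exp (lam * t * q / θ ^ 2) * η (t, q - lam * t ^ 2 / 2)) :
    ∀ t q : ℝ,
      θ ^ 2 * partialT ηV t q = -(θ ^ 4 / 2) * partialQQ ηV t q + lam * q * ηV (t, q) := by
  have hθ2 : (θ : ℝ) ≠ 0 := ne_of_gt hθ
  have hdη : Differentiable ℝ η := hη.differentiable two_ne_zero
  have hfd : ContDiff ℝ 1 (fderiv ℝ η) := hη.fderiv_right (by norm_num)
  set D2f : ℝ × ℝ → ℝ := fun p => fderiv ℝ η p ((0 : ℝ), (1 : ℝ)) with hD2fdef
  have hD2f : ContDiff ℝ 1 D2f :=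
    (ContinuousLinearMap.apply ℝ ℝ ((0 : ℝ), (1 : ℝ))).contDiff.comp hfd
  have hD2fd : Differentiable ℝ D2f := hD2f.differentiable one_ne_zero
  -- partialQ η in terms of D2f
  have hpq : ∀ t r : ℝ, partialQ η t r = D2f (t, r) := by
    intro t r
    have h : HasDerivAt (fun x => η (t, x)) (fderiv ℝ η (t, r) ((0 : ℝ), (1 : ℝ))) r :=
      (hdη (t, r)).hasFDerivAt.comp_hasDerivAt r
        ((hasDerivAt_const r t).prodMk (hasDerivAt_id r))
    exact h.deriv
  -- partialQQ η in terms of fderiv of D2f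
  have hqq : ∀ t u : ℝ, partialQQ η t u = fderiv ℝ D2f (t, u) ((0 : ℝ), (1 : ℝ)) := by
    intro t u
    have funeq : (fun r => partialQ η t r) = fun r => D2f (t, r) := funext fun r => hpq t r
    have h : HasDerivAt (fun r => D2f (t, r)) (fderiv ℝ D2f (t, u) ((0 : ℝ), (1 : ℝ))) u :=
      (hD2fd (t, u)).hasFDerivAt.comp_hasDerivAt u
        ((hasDerivAt_const u t).prodMk (hasDerivAt_id u))
    rw [partialQQ, funeq, h.deriv]
  -- partialT η in terms of fderiv
  have hpt : ∀ t u : ℝ, partialT η t u = fderiv ℝ η (t, u) ((1 : ℝ), (0 : ℝ)) := by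
    intro t u
    have h : HasDerivAt (fun s => η (s, u)) (fderiv ℝ η (t, u) ((1 : ℝ), (0 : ℝ))) t :=
      (hdη (t, u)).hasFDerivAt.comp_hasDerivAt t
        ((hasDerivAt_id t).prodMk (hasDerivAt_const t u))
    exact h.deriv
  intro t q
  set A : ℝ := Real.exp (-lam ^ 2 * t ^ 3 / (6 * θ ^ 2)) with hA
  set u : ℝ := q - lam * t ^ 2 / 2 with hu
  set a : ℝ := η (t, u) with ha
  set b : ℝ := D2f (t, u) with hb
  set qq : ℝ := fderiv ℝ D2f (t, u) ((0 : ℝ), (1 : ℝ)) with hqqv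
  set dT : ℝ := fderiv ℝ η (t, u) ((1 : ℝ), (0 : ℝ)) with hdT
  have hfree' : θ ^ 2 * dT = -(θ ^ 4 / 2) * qq := by
    rw [hdT, hqqv, ← hpt, ← hqq]; exact hfree t u
  have hdTval : dT = -(θ ^ 2 / 2) * qq := by
    have h2 : (θ : ℝ) ^ 2 ≠ 0 := pow_ne_zero 2 hθ2
    have h3 : θ ^ 2 * dT = θ ^ 2 * (-(θ ^ 2 / 2) * qq) := by rw [hfree']; ring
    exact mul_left_cancel₀ h2 h3
  -- splitting the directional derivative
  have hsplit : fderiv ℝ η (t, u) ((1 : ℝ), -(lam * t)) = dT + (-(lam * t)) * b := by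
    have hv : ((1 : ℝ), -(lam * t)) = ((1 : ℝ), (0 : ℝ)) + (-(lam * t)) • ((0 : ℝ), (1 : ℝ)) := by
      simp [Prod.ext_iff]
    rw [hv, map_add, map_smul, hdT, hb, hD2fdef]
    simp [smul_eq_mul]
  -- derivative building blocks in q
  have hexpq : ∀ r : ℝ, HasDerivAt (fun x => A * Real.exp (lam * t * x / θ ^ 2))
      (A * (Real.exp (lam * t * r / θ ^ 2) * (lam * t / θ ^ 2))) r := by
    intro r
    have h1 : HasDerivAt (fun x : ℝ => lam * t * x / θ ^ 2) (lam * t / θ ^ 2) r := by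
      have := ((hasDerivAt_id r).const_mul (lam * t)).div_const (θ ^ 2)
      simpa using this
    exact h1.exp.const_mul A
  have hcompq : ∀ r : ℝ, HasDerivAt (fun x => η (t, x - lam * t ^ 2 / 2))
      (D2f (t, r - lam * t ^ 2 / 2)) r := by
    intro r
    exact (hdη (t, r - lam * t ^ 2 / 2)).hasFDerivAt.comp_hasDerivAt r
      ((hasDerivAt_const r t).prodMk ((hasDerivAt_id r).sub_const _))
  -- partialQ of ηV
  have hQ : ∀ r : ℝ, partialQ ηV t r =
      A * (Real.exp (lam * t * r / θ ^ 2) * (lam * t / θ ^ 2)) * η (t, r - lam * t ^ 2 / 2)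
      + A * Real.exp (lam * t * r / θ ^ 2) * D2f (t, r - lam * t ^ 2 / 2) := by
    intro r
    have funeq : (fun x => ηV (t, x)) =
        fun x => A * Real.exp (lam * t * x / θ ^ 2) * η (t, x - lam * t ^ 2 / 2) :=
      funext fun x => hηV t x
    have H := (hexpq r).fun_mul (hcompq r)
    rw [partialQ, funeq, H.deriv]
  -- partialQQ of ηV
  have hcompD2 : HasDerivAt (fun x => D2f (t, x - lam * t ^ 2 / 2)) qq q := by
    have h := (hD2fd (t, q - lam * t ^ 2 / 2)).hasFDerivAt.comp_hasDerivAt q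
      ((hasDerivAt_const q t).prodMk ((hasDerivAt_id q).sub_const _))
    rw [hqqv, hu]
    exact h
  have hQQval : partialQQ ηV t q =
      (A * (Real.exp (lam * t * q / θ ^ 2) * (lam * t / θ ^ 2)) * ((lam * t / θ ^ 2) * a + b))
      + A * Real.exp (lam * t * q / θ ^ 2)
        * ((lam * t / θ ^ 2) * b + qq) := by
    have funeq : (fun r => partialQ ηV t r) =
        fun r => A * Real.exp (lam * t * r / θ ^ 2) *
          ((lam * t / θ ^ 2) * η (t, r - lam * t ^ 2 / 2) + D2f (t, r - lam * t ^ 2 / 2)) := by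
      funext r
      rw [hQ r]; ring
    have hsum : HasDerivAt (fun r =>
        (lam * t / θ ^ 2) * η (t, r - lam * t ^ 2 / 2) + D2f (t, r - lam * t ^ 2 / 2))
        ((lam * t / θ ^ 2) * b + qq) q := by
      have h1 := (hcompq q).const_mul (lam * t / θ ^ 2)
      have h2 := h1.add hcompD2
      rw [hb, hu]
      exact h2
    have H := (hexpq q).fun_mul hsum
    rw [partialQQ, funeq, H.deriv]
  -- partialT of ηV
  have hTval : partialT ηV t q =
      A * (-lam ^ 2 * t ^ 2 / (2 * θ ^ 2)) * Real.exp (lam * t * q / θ ^ 2) * a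
      + A * (Real.exp (lam * t * q / θ ^ 2) * (lam * q / θ ^ 2)) * a
      + A * Real.exp (lam * t * q / θ ^ 2) * (dT + (-(lam * t)) * b) := by
    have funeq : (fun s => ηV (s, q)) =
        fun s => Real.exp (-lam ^ 2 * s ^ 3 / (6 * θ ^ 2)) *
          Real.exp (lam * s * q / θ ^ 2) * η (s, q - lam * s ^ 2 / 2) :=
      funext fun s => hηV s q
    have hAd : HasDerivAt (fun s : ℝ => Real.exp (-lam ^ 2 * s ^ 3 / (6 * θ ^ 2)))
        (A * (-lam ^ 2 * t ^ 2 / (2 * θ ^ 2))) t := by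
      have h : HasDerivAt (fun s : ℝ => -lam ^ 2 * s ^ 3 / (6 * θ ^ 2))
          (-lam ^ 2 * t ^ 2 / (2 * θ ^ 2)) t := by
        have h0 := ((hasDerivAt_pow 3 t).const_mul (-lam ^ 2)).div_const (6 * θ ^ 2)
        refine h0.congr_deriv ?_
        push_cast
        ring
      simpa [hA] using h.exp
    have hBd : HasDerivAt (fun s : ℝ => Real.exp (lam * s * q / θ ^ 2))
        (Real.exp (lam * t * q / θ ^ 2) * (lam * q / θ ^ 2)) t := by
      have h : HasDerivAt (fun s : ℝ => lam * s * q / θ ^ 2) (lam * q / θ ^ 2) t := by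
        have h0 := (((hasDerivAt_id t).const_mul lam).mul_const q).div_const (θ ^ 2)
        refine h0.congr_deriv ?_
        ring
      exact h.exp
    have h2 : HasDerivAt (fun s : ℝ => q - lam * s ^ 2 / 2) (-(lam * t)) t := by
      have h0 := (((hasDerivAt_pow 2 t).const_mul lam).div_const 2).const_sub q
      refine h0.congr_deriv ?_
      push_cast
      ring
    have hφ : HasDerivAt (fun s : ℝ => ((s : ℝ), q - lam * s ^ 2 / 2))
        (((1 : ℝ), -(lam * t))) t := (hasDerivAt_id t).prodMk h2
    have hηt : HasDerivAt (fun s => η (s, q - lam * s ^ 2 / 2))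
        (dT + (-(lam * t)) * b) t := by
      have h := (hdη (t, q - lam * t ^ 2 / 2)).hasFDerivAt.comp_hasDerivAt t hφ
      rw [← hu] at h
      rw [← hsplit]
      exact h
    have H := (hAd.fun_mul hBd).fun_mul hηt
    rw [partialT, funeq, H.deriv]
    rw [← hA, ← hu, ← ha]
    ring
  rw [hTval, hQQval, hηV t q, ← hA, ← hu, ← ha, hdTval]
  field_simp
  ring
end

section
/- Let θ > 0 and ω ≠ 0 be real numbers. Suppose η : ℝ × ℝ → ℝ is twice continuously differentiable and satisfies the free backward heat equation θ² ∂η/∂t (t,q) = -(θ⁴/2) ∂²η/∂q² (t,q) for all (t,q) ∈ ℝ × ℝ. Define η^V(t,q) = cosh(ωt)^{-1/2} · exp( ω q² tanh(ωt) / (2θ²) ) · η( tanh(ωt)/ω , q/cosh(ωt) ). Then η^V satisfies the backward heat equation with quadratic (harmonic oscillator) potential V(q) = ω²q²/2, namely θ² ∂η^V/∂t (t,q) = -(θ⁴/2) ∂²η^V/∂q² (t,q) + (ω² q²/2) · η^V(t,q) for all (t,q) ∈ ℝ × ℝ. -/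
lemma algebra_final (θ ω q c th A E f g1 g2 pT : ℝ) (hθ : θ ≠ 0) (hc : c ≠ 0)
    (hfree : θ ^ 2 * pT = -(θ ^ 4 / 2) * g2) (hth : th ^ 2 = 1 - 1 / c ^ 2) :
    θ ^ 2 * (A * E * (-(ω / 2) * th * f + ω ^ 2 * q ^ 2 / (2 * θ ^ 2 * c ^ 2) * f +
        1 / c ^ 2 * pT + -(q * ω * th / c) * g1)) =
      -(θ ^ 4 / 2) * (A * (E * (q * ω * th / θ ^ 2) * (q * ω * th / θ ^ 2 * f + g1 / c) +
          E * (ω * th / θ ^ 2 * f + q * ω * th / θ ^ 2 * (g1 * (1 / c)) + g2 * (1 / c) / c))) +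
        ω ^ 2 * q ^ 2 / 2 * (A * E * f) := by
  have h1 : pT = -(θ ^ 2 / 2) * g2 := by
    have h2 : (θ:ℝ) ^ 2 ≠ 0 := pow_ne_zero 2 hθ
    apply mul_left_cancel₀ h2
    rw [hfree]; ring
  have hth' : th ^ 2 * c ^ 2 = c ^ 2 - 1 := by
    rw [hth]; field_simp
  rw [h1]
  field_simp
  ring_nf
  linear_combination (A * E * ω ^ 2 * f * q ^ 2) * hth'

set_option maxHeartbeats 2000000 in
/-- from a `C²` solution `η` of the free backward heat equation
`θ² η_t = -(θ⁴/2) η_qq`, the function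
`η^V(t,q) = cosh(ωt)^{-1/2} exp(ωq² tanh(ωt)/(2θ²)) η(tanh(ωt)/ω, q/cosh(ωt))`
solves the backward heat equation with harmonic potential `V(q) = ω²q²/2`. -/
theorem heat_quadratic_potential (θ ω : ℝ) (hθ : 0 < θ) (hω : ω ≠ 0) (η : ℝ × ℝ → ℝ)
    (hη : ContDiff ℝ 2 η)
    (hfree : ∀ t q : ℝ, θ ^ 2 * partialT η t q = -(θ ^ 4 / 2) * partialQQ η t q)
    (ηV : ℝ × ℝ → ℝ)
    (hηV : ∀ t q : ℝ,
      ηV (t, q) = Real.cosh (ω * t) ^ (-(1 : ℝ) / 2) *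
        Real.exp (ω * q ^ 2 * Real.tanh (ω * t) / (2 * θ ^ 2)) *
        η (Real.tanh (ω * t) / ω, q / Real.cosh (ω * t))) :
    ∀ t q : ℝ,
      θ ^ 2 * partialT ηV t q =
        -(θ ^ 4 / 2) * partialQQ ηV t q + ω ^ 2 * q ^ 2 / 2 * ηV (t, q) := by
  have hθ' : (θ:ℝ) ≠ 0 := ne_of_gt hθ
  have hd : Differentiable ℝ η := hη.differentiable (by norm_num)
  have hD : Differentiable ℝ (fderiv ℝ η) :=
    (hη.fderiv_right (le_refl 2) : ContDiff ℝ 1 (fderiv ℝ η)).differentiable (by norm_num)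
  -- basic partial derivative facts for η
  have HT : ∀ a b : ℝ, HasDerivAt (fun s => η (s, b)) (fderiv ℝ η (a, b) (1, 0)) a := fun a b =>
    (hd (a, b)).hasFDerivAt.comp_hasDerivAt a ((hasDerivAt_id a).prodMk (hasDerivAt_const a b))
  have HQ : ∀ a b : ℝ, HasDerivAt (fun r => η (a, r)) (fderiv ℝ η (a, b) (0, 1)) b := fun a b =>
    (hd (a, b)).hasFDerivAt.comp_hasDerivAt b ((hasDerivAt_const b a).prodMk (hasDerivAt_id b))
  have HQ2 : ∀ a b : ℝ, HasDerivAt (fun r => fderiv ℝ η (a, r) (0, 1))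
      (fderiv ℝ (fderiv ℝ η) (a, b) (0, 1) (0, 1)) b := by
    intro a b
    have h1 : HasDerivAt (fun r => fderiv ℝ η (a, r)) (fderiv ℝ (fderiv ℝ η) (a, b) (0, 1)) b :=
      (hD (a, b)).hasFDerivAt.comp_hasDerivAt b ((hasDerivAt_const b a).prodMk (hasDerivAt_id b))
    have h2 := h1.clm_apply (hasDerivAt_const b ((0 : ℝ), (1 : ℝ)))
    simpa using h2
  have hpT : ∀ a b : ℝ, partialT η a b = fderiv ℝ η (a, b) (1, 0) := by
    intro a b; unfold partialT; exact (HT a b).deriv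
  have hpQ : ∀ a b : ℝ, partialQ η a b = fderiv ℝ η (a, b) (0, 1) := by
    intro a b; unfold partialQ; exact (HQ a b).deriv
  have hpQQ : ∀ a b : ℝ, partialQQ η a b = fderiv ℝ (fderiv ℝ η) (a, b) (0, 1) (0, 1) := by
    intro a b; unfold partialQQ
    have he : (fun r => partialQ η a r) = fun r => fderiv ℝ η (a, r) (0, 1) :=
      funext fun r => hpQ a r
    rw [he]; exact (HQ2 a b).deriv
  have hfree2 : ∀ a b : ℝ, θ ^ 2 * fderiv ℝ η (a, b) (1, 0) =
      -(θ ^ 4 / 2) * fderiv ℝ (fderiv ℝ η) (a, b) (0, 1) (0, 1) := by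
    intro a b; have h := hfree a b; rwa [hpT, hpQQ] at h
  have hlin : ∀ (p : ℝ × ℝ) (u v : ℝ), fderiv ℝ η p (u, v) =
      u * fderiv ℝ η p (1, 0) + v * fderiv ℝ η p (0, 1) := by
    intro p u v
    have h : ((u, v) : ℝ × ℝ) = u • ((1 : ℝ), (0 : ℝ)) + v • ((0 : ℝ), (1 : ℝ)) := by
      simp [Prod.ext_iff]
    rw [h, map_add, map_smul, map_smul, smul_eq_mul, smul_eq_mul]
  intro t q
  have hc0 : (0 : ℝ) < Real.cosh (ω * t) := Real.cosh_pos _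
  have hc : Real.cosh (ω * t) ≠ 0 := ne_of_gt hc0
  have hth : Real.tanh (ω * t) ^ 2 = 1 - 1 / Real.cosh (ω * t) ^ 2 := by
    rw [Real.tanh_eq_sinh_div_cosh, div_pow, Real.sinh_sq]
    field_simp
  -- derivatives of the hyperbolic building blocks
  have hcosh' : HasDerivAt (fun s => Real.cosh (ω * s)) (Real.sinh (ω * t) * (ω * 1)) t :=
    (Real.hasDerivAt_cosh (ω * t)).comp t ((hasDerivAt_id t).const_mul ω)
  have hsinh' : HasDerivAt (fun s => Real.sinh (ω * s)) (Real.cosh (ω * t) * (ω * 1)) t :=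
    (Real.hasDerivAt_sinh (ω * t)).comp t ((hasDerivAt_id t).const_mul ω)
  have htanh : HasDerivAt (fun s => Real.tanh (ω * s)) (ω / Real.cosh (ω * t) ^ 2) t := by
    have he : (fun s => Real.tanh (ω * s)) = fun s => Real.sinh (ω * s) / Real.cosh (ω * s) :=
      funext fun s => Real.tanh_eq_sinh_div_cosh _
    rw [he]
    have h := hsinh'.div hcosh' hc
    have hv : (Real.cosh (ω * t) * (ω * 1) * Real.cosh (ω * t) -
        Real.sinh (ω * t) * (Real.sinh (ω * t) * (ω * 1))) / Real.cosh (ω * t) ^ 2 =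
        ω / Real.cosh (ω * t) ^ 2 := by
      rw [show Real.cosh (ω * t) * (ω * 1) * Real.cosh (ω * t) -
          Real.sinh (ω * t) * (Real.sinh (ω * t) * (ω * 1)) =
          ω * (Real.cosh (ω * t) ^ 2 - Real.sinh (ω * t) ^ 2) from by ring,
        Real.cosh_sq_sub_sinh_sq, mul_one]
    rwa [hv] at h
  have hA : HasDerivAt (fun s => Real.cosh (ω * s) ^ (-(1 : ℝ) / 2))
      (-(ω / 2) * Real.tanh (ω * t) * Real.cosh (ω * t) ^ (-(1 : ℝ) / 2)) t := by
    have h := (Real.hasDerivAt_rpow_const (x := Real.cosh (ω * t)) (p := -(1 : ℝ) / 2)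
      (Or.inl hc)).comp t hcosh'
    have hv : -(1 : ℝ) / 2 * Real.cosh (ω * t) ^ (-(1 : ℝ) / 2 - 1) *
        (Real.sinh (ω * t) * (ω * 1)) =
        -(ω / 2) * Real.tanh (ω * t) * Real.cosh (ω * t) ^ (-(1 : ℝ) / 2) := by
      rw [Real.rpow_sub hc0, Real.rpow_one, Real.tanh_eq_sinh_div_cosh]
      field_simp
    rwa [hv] at h
  have hE_t : HasDerivAt (fun s => Real.exp (ω * q ^ 2 * Real.tanh (ω * s) / (2 * θ ^ 2)))
      (Real.exp (ω * q ^ 2 * Real.tanh (ω * t) / (2 * θ ^ 2)) *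
        (ω * q ^ 2 * (ω / Real.cosh (ω * t) ^ 2) / (2 * θ ^ 2))) t :=
    ((htanh.const_mul (ω * q ^ 2)).div_const (2 * θ ^ 2)).exp
  have hτ : HasDerivAt (fun s => Real.tanh (ω * s) / ω) (1 / Real.cosh (ω * t) ^ 2) t := by
    have h := htanh.div_const ω
    have hv : ω / Real.cosh (ω * t) ^ 2 / ω = 1 / Real.cosh (ω * t) ^ 2 := by
      field_simp
    rwa [hv] at h
  have hξ : HasDerivAt (fun s => q / Real.cosh (ω * s))
      (-(q * ω * Real.tanh (ω * t) / Real.cosh (ω * t))) t := by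
    have h := (hasDerivAt_const t q).div hcosh' hc
    have hv : (0 * Real.cosh (ω * t) - q * (Real.sinh (ω * t) * (ω * 1))) /
        Real.cosh (ω * t) ^ 2 = -(q * ω * Real.tanh (ω * t) / Real.cosh (ω * t)) := by
      rw [Real.tanh_eq_sinh_div_cosh]
      field_simp
      ring
    rwa [hv] at h
  have hcomp : HasDerivAt
      (fun s => η (Real.tanh (ω * s) / ω, q / Real.cosh (ω * s)))
      (1 / Real.cosh (ω * t) ^ 2 *
          fderiv ℝ η (Real.tanh (ω * t) / ω, q / Real.cosh (ω * t)) (1, 0) +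
        -(q * ω * Real.tanh (ω * t) / Real.cosh (ω * t)) *
          fderiv ℝ η (Real.tanh (ω * t) / ω, q / Real.cosh (ω * t)) (0, 1)) t := by
    have h := (hd (Real.tanh (ω * t) / ω, q / Real.cosh (ω * t))).hasFDerivAt.comp_hasDerivAt t
      (hτ.prodMk hξ)
    rwa [hlin] at h
  -- time derivative of ηV
  have hVt : HasDerivAt (fun s => ηV (s, q))
      (Real.cosh (ω * t) ^ (-(1 : ℝ) / 2) *
        Real.exp (ω * q ^ 2 * Real.tanh (ω * t) / (2 * θ ^ 2)) *
        (-(ω / 2) * Real.tanh (ω * t) * η (Real.tanh (ω * t) / ω, q / Real.cosh (ω * t)) +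
          ω ^ 2 * q ^ 2 / (2 * θ ^ 2 * Real.cosh (ω * t) ^ 2) *
            η (Real.tanh (ω * t) / ω, q / Real.cosh (ω * t)) +
          1 / Real.cosh (ω * t) ^ 2 *
            fderiv ℝ η (Real.tanh (ω * t) / ω, q / Real.cosh (ω * t)) (1, 0) +
          -(q * ω * Real.tanh (ω * t) / Real.cosh (ω * t)) *
            fderiv ℝ η (Real.tanh (ω * t) / ω, q / Real.cosh (ω * t)) (0, 1))) t := by
    have hfun : (fun s => ηV (s, q)) = fun s =>
        Real.cosh (ω * s) ^ (-(1 : ℝ) / 2) *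
          Real.exp (ω * q ^ 2 * Real.tanh (ω * s) / (2 * θ ^ 2)) *
          η (Real.tanh (ω * s) / ω, q / Real.cosh (ω * s)) := funext fun s => hηV s q
    rw [hfun]
    have h := (hA.mul hE_t).mul hcomp
    have hv : (-(ω / 2) * Real.tanh (ω * t) * Real.cosh (ω * t) ^ (-(1 : ℝ) / 2) *
          Real.exp (ω * q ^ 2 * Real.tanh (ω * t) / (2 * θ ^ 2)) +
        Real.cosh (ω * t) ^ (-(1 : ℝ) / 2) *
          (Real.exp (ω * q ^ 2 * Real.tanh (ω * t) / (2 * θ ^ 2)) *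
            (ω * q ^ 2 * (ω / Real.cosh (ω * t) ^ 2) / (2 * θ ^ 2)))) *
          η (Real.tanh (ω * t) / ω, q / Real.cosh (ω * t)) +
        Real.cosh (ω * t) ^ (-(1 : ℝ) / 2) *
          Real.exp (ω * q ^ 2 * Real.tanh (ω * t) / (2 * θ ^ 2)) *
          (1 / Real.cosh (ω * t) ^ 2 *
              fderiv ℝ η (Real.tanh (ω * t) / ω, q / Real.cosh (ω * t)) (1, 0) +
            -(q * ω * Real.tanh (ω * t) / Real.cosh (ω * t)) *
              fderiv ℝ η (Real.tanh (ω * t) / ω, q / Real.cosh (ω * t)) (0, 1)) =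
        Real.cosh (ω * t) ^ (-(1 : ℝ) / 2) *
          Real.exp (ω * q ^ 2 * Real.tanh (ω * t) / (2 * θ ^ 2)) *
          (-(ω / 2) * Real.tanh (ω * t) * η (Real.tanh (ω * t) / ω, q / Real.cosh (ω * t)) +
            ω ^ 2 * q ^ 2 / (2 * θ ^ 2 * Real.cosh (ω * t) ^ 2) *
              η (Real.tanh (ω * t) / ω, q / Real.cosh (ω * t)) +
            1 / Real.cosh (ω * t) ^ 2 *
              fderiv ℝ η (Real.tanh (ω * t) / ω, q / Real.cosh (ω * t)) (1, 0) +
            -(q * ω * Real.tanh (ω * t) / Real.cosh (ω * t)) *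
              fderiv ℝ η (Real.tanh (ω * t) / ω, q / Real.cosh (ω * t)) (0, 1)) := by
      field_simp
      ring
    rw [← hv]; exact h
  -- first space derivative of ηV
  have hQ1 : ∀ r : ℝ, HasDerivAt (fun x => ηV (t, x))
      (Real.cosh (ω * t) ^ (-(1 : ℝ) / 2) *
        Real.exp (ω * r ^ 2 * Real.tanh (ω * t) / (2 * θ ^ 2)) *
        (r * ω * Real.tanh (ω * t) / θ ^ 2 *
            η (Real.tanh (ω * t) / ω, r / Real.cosh (ω * t)) +
          fderiv ℝ η (Real.tanh (ω * t) / ω, r / Real.cosh (ω * t)) (0, 1) /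
            Real.cosh (ω * t))) r := by
    intro r
    have hfun : (fun x => ηV (t, x)) = fun x =>
        Real.cosh (ω * t) ^ (-(1 : ℝ) / 2) *
          Real.exp (ω * x ^ 2 * Real.tanh (ω * t) / (2 * θ ^ 2)) *
          η (Real.tanh (ω * t) / ω, x / Real.cosh (ω * t)) := funext fun x => hηV t x
    rw [hfun]
    have hE : HasDerivAt (fun x => Real.exp (ω * x ^ 2 * Real.tanh (ω * t) / (2 * θ ^ 2)))
        (Real.exp (ω * r ^ 2 * Real.tanh (ω * t) / (2 * θ ^ 2)) *
          (ω * ((2 : ℕ) * r ^ (2 - 1)) * Real.tanh (ω * t) / (2 * θ ^ 2))) r :=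
      ((((hasDerivAt_pow 2 r).const_mul ω).mul_const (Real.tanh (ω * t))).div_const
        (2 * θ ^ 2)).exp
    have hf : HasDerivAt (fun x => η (Real.tanh (ω * t) / ω, x / Real.cosh (ω * t)))
        (fderiv ℝ η (Real.tanh (ω * t) / ω, r / Real.cosh (ω * t)) (0, 1) *
          (1 / Real.cosh (ω * t))) r :=
      (HQ (Real.tanh (ω * t) / ω) (r / Real.cosh (ω * t))).comp (h := fun x => x / Real.cosh (ω * t)) r
        ((hasDerivAt_id' r).div_const (Real.cosh (ω * t)))
    have h := (hE.const_mul (Real.cosh (ω * t) ^ (-(1 : ℝ) / 2))).mul hf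
    have hv : Real.cosh (ω * t) ^ (-(1 : ℝ) / 2) *
          (Real.exp (ω * r ^ 2 * Real.tanh (ω * t) / (2 * θ ^ 2)) *
            (ω * ((2 : ℕ) * r ^ (2 - 1)) * Real.tanh (ω * t) / (2 * θ ^ 2))) *
          η (Real.tanh (ω * t) / ω, r / Real.cosh (ω * t)) +
        Real.cosh (ω * t) ^ (-(1 : ℝ) / 2) *
          Real.exp (ω * r ^ 2 * Real.tanh (ω * t) / (2 * θ ^ 2)) *
          (fderiv ℝ η (Real.tanh (ω * t) / ω, r / Real.cosh (ω * t)) (0, 1) *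
            (1 / Real.cosh (ω * t))) =
        Real.cosh (ω * t) ^ (-(1 : ℝ) / 2) *
          Real.exp (ω * r ^ 2 * Real.tanh (ω * t) / (2 * θ ^ 2)) *
          (r * ω * Real.tanh (ω * t) / θ ^ 2 *
              η (Real.tanh (ω * t) / ω, r / Real.cosh (ω * t)) +
            fderiv ℝ η (Real.tanh (ω * t) / ω, r / Real.cosh (ω * t)) (0, 1) /
              Real.cosh (ω * t)) := by
      push_cast
      field_simp
    rwa [hv] at h
  have hPQ : ∀ r : ℝ, partialQ ηV t r =
      Real.cosh (ω * t) ^ (-(1 : ℝ) / 2) *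
        Real.exp (ω * r ^ 2 * Real.tanh (ω * t) / (2 * θ ^ 2)) *
        (r * ω * Real.tanh (ω * t) / θ ^ 2 *
            η (Real.tanh (ω * t) / ω, r / Real.cosh (ω * t)) +
          fderiv ℝ η (Real.tanh (ω * t) / ω, r / Real.cosh (ω * t)) (0, 1) /
            Real.cosh (ω * t)) := by
    intro r; unfold partialQ; exact (hQ1 r).deriv
  -- second space derivative of ηV
  have hQ2 : HasDerivAt (fun r =>
      Real.cosh (ω * t) ^ (-(1 : ℝ) / 2) *
        Real.exp (ω * r ^ 2 * Real.tanh (ω * t) / (2 * θ ^ 2)) *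
        (r * ω * Real.tanh (ω * t) / θ ^ 2 *
            η (Real.tanh (ω * t) / ω, r / Real.cosh (ω * t)) +
          fderiv ℝ η (Real.tanh (ω * t) / ω, r / Real.cosh (ω * t)) (0, 1) /
            Real.cosh (ω * t)))
      (Real.cosh (ω * t) ^ (-(1 : ℝ) / 2) *
        (Real.exp (ω * q ^ 2 * Real.tanh (ω * t) / (2 * θ ^ 2)) *
            (q * ω * Real.tanh (ω * t) / θ ^ 2) *
            (q * ω * Real.tanh (ω * t) / θ ^ 2 *
                η (Real.tanh (ω * t) / ω, q / Real.cosh (ω * t)) +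
              fderiv ℝ η (Real.tanh (ω * t) / ω, q / Real.cosh (ω * t)) (0, 1) /
                Real.cosh (ω * t)) +
          Real.exp (ω * q ^ 2 * Real.tanh (ω * t) / (2 * θ ^ 2)) *
            (ω * Real.tanh (ω * t) / θ ^ 2 *
                η (Real.tanh (ω * t) / ω, q / Real.cosh (ω * t)) +
              q * ω * Real.tanh (ω * t) / θ ^ 2 *
                (fderiv ℝ η (Real.tanh (ω * t) / ω, q / Real.cosh (ω * t)) (0, 1) *
                  (1 / Real.cosh (ω * t))) +
              fderiv ℝ (fderiv ℝ η) (Real.tanh (ω * t) / ω, q / Real.cosh (ω * t)) (0, 1) (0, 1) *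
                  (1 / Real.cosh (ω * t)) / Real.cosh (ω * t)))) q := by
    have hE : HasDerivAt (fun x => Real.exp (ω * x ^ 2 * Real.tanh (ω * t) / (2 * θ ^ 2)))
        (Real.exp (ω * q ^ 2 * Real.tanh (ω * t) / (2 * θ ^ 2)) *
          (ω * ((2 : ℕ) * q ^ (2 - 1)) * Real.tanh (ω * t) / (2 * θ ^ 2))) q :=
      ((((hasDerivAt_pow 2 q).const_mul ω).mul_const (Real.tanh (ω * t))).div_const
        (2 * θ ^ 2)).exp
    have hf : HasDerivAt (fun x => η (Real.tanh (ω * t) / ω, x / Real.cosh (ω * t)))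
        (fderiv ℝ η (Real.tanh (ω * t) / ω, q / Real.cosh (ω * t)) (0, 1) *
          (1 / Real.cosh (ω * t))) q :=
      (HQ (Real.tanh (ω * t) / ω) (q / Real.cosh (ω * t))).comp (h := fun x => x / Real.cosh (ω * t)) q
        ((hasDerivAt_id' q).div_const (Real.cosh (ω * t)))
    have hcoef : HasDerivAt (fun r : ℝ => r * ω * Real.tanh (ω * t) / θ ^ 2)
        (1 * ω * Real.tanh (ω * t) / θ ^ 2) q :=
      (((hasDerivAt_id q).mul_const ω).mul_const (Real.tanh (ω * t))).div_const (θ ^ 2)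
    have hg1 : HasDerivAt
        (fun r => fderiv ℝ η (Real.tanh (ω * t) / ω, r / Real.cosh (ω * t)) (0, 1) /
          Real.cosh (ω * t))
        (fderiv ℝ (fderiv ℝ η) (Real.tanh (ω * t) / ω, q / Real.cosh (ω * t)) (0, 1) (0, 1) *
          (1 / Real.cosh (ω * t)) / Real.cosh (ω * t)) q :=
      (((HQ2 (Real.tanh (ω * t) / ω) (q / Real.cosh (ω * t))).comp q
        ((hasDerivAt_id' q).div_const (Real.cosh (ω * t)))).div_const (Real.cosh (ω * t)))
    have hG := (hcoef.mul hf).add hg1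
    have h := (hE.const_mul (Real.cosh (ω * t) ^ (-(1 : ℝ) / 2))).mul hG
    have hv : Real.cosh (ω * t) ^ (-(1 : ℝ) / 2) *
          (Real.exp (ω * q ^ 2 * Real.tanh (ω * t) / (2 * θ ^ 2)) *
            (ω * ((2 : ℕ) * q ^ (2 - 1)) * Real.tanh (ω * t) / (2 * θ ^ 2))) *
          (q * ω * Real.tanh (ω * t) / θ ^ 2 *
              η (Real.tanh (ω * t) / ω, q / Real.cosh (ω * t)) +
            fderiv ℝ η (Real.tanh (ω * t) / ω, q / Real.cosh (ω * t)) (0, 1) /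
              Real.cosh (ω * t)) +
        Real.cosh (ω * t) ^ (-(1 : ℝ) / 2) *
          Real.exp (ω * q ^ 2 * Real.tanh (ω * t) / (2 * θ ^ 2)) *
          (1 * ω * Real.tanh (ω * t) / θ ^ 2 *
              η (Real.tanh (ω * t) / ω, q / Real.cosh (ω * t)) +
            q * ω * Real.tanh (ω * t) / θ ^ 2 *
              (fderiv ℝ η (Real.tanh (ω * t) / ω, q / Real.cosh (ω * t)) (0, 1) *
                (1 / Real.cosh (ω * t))) +
            fderiv ℝ (fderiv ℝ η) (Real.tanh (ω * t) / ω, q / Real.cosh (ω * t)) (0, 1) (0, 1) *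
                (1 / Real.cosh (ω * t)) / Real.cosh (ω * t)) =
        Real.cosh (ω * t) ^ (-(1 : ℝ) / 2) *
          (Real.exp (ω * q ^ 2 * Real.tanh (ω * t) / (2 * θ ^ 2)) *
              (q * ω * Real.tanh (ω * t) / θ ^ 2) *
              (q * ω * Real.tanh (ω * t) / θ ^ 2 *
                  η (Real.tanh (ω * t) / ω, q / Real.cosh (ω * t)) +
                fderiv ℝ η (Real.tanh (ω * t) / ω, q / Real.cosh (ω * t)) (0, 1) /
                  Real.cosh (ω * t)) +
            Real.exp (ω * q ^ 2 * Real.tanh (ω * t) / (2 * θ ^ 2)) *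
              (ω * Real.tanh (ω * t) / θ ^ 2 *
                  η (Real.tanh (ω * t) / ω, q / Real.cosh (ω * t)) +
                q * ω * Real.tanh (ω * t) / θ ^ 2 *
                  (fderiv ℝ η (Real.tanh (ω * t) / ω, q / Real.cosh (ω * t)) (0, 1) *
                    (1 / Real.cosh (ω * t))) +
                fderiv ℝ (fderiv ℝ η) (Real.tanh (ω * t) / ω, q / Real.cosh (ω * t)) (0, 1)
                    (0, 1) * (1 / Real.cosh (ω * t)) / Real.cosh (ω * t))) := by
      push_cast
      field_simp
    rw [← hv]; exact h
  have hPQQ : partialQQ ηV t q =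
      Real.cosh (ω * t) ^ (-(1 : ℝ) / 2) *
        (Real.exp (ω * q ^ 2 * Real.tanh (ω * t) / (2 * θ ^ 2)) *
            (q * ω * Real.tanh (ω * t) / θ ^ 2) *
            (q * ω * Real.tanh (ω * t) / θ ^ 2 *
                η (Real.tanh (ω * t) / ω, q / Real.cosh (ω * t)) +
              fderiv ℝ η (Real.tanh (ω * t) / ω, q / Real.cosh (ω * t)) (0, 1) /
                Real.cosh (ω * t)) +
          Real.exp (ω * q ^ 2 * Real.tanh (ω * t) / (2 * θ ^ 2)) *
            (ω * Real.tanh (ω * t) / θ ^ 2 *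
                η (Real.tanh (ω * t) / ω, q / Real.cosh (ω * t)) +
              q * ω * Real.tanh (ω * t) / θ ^ 2 *
                (fderiv ℝ η (Real.tanh (ω * t) / ω, q / Real.cosh (ω * t)) (0, 1) *
                  (1 / Real.cosh (ω * t))) +
              fderiv ℝ (fderiv ℝ η) (Real.tanh (ω * t) / ω, q / Real.cosh (ω * t)) (0, 1) (0, 1) *
                  (1 / Real.cosh (ω * t)) / Real.cosh (ω * t))) := by
    unfold partialQQ
    have he : (fun r => partialQ ηV t r) = fun r =>
        Real.cosh (ω * t) ^ (-(1 : ℝ) / 2) *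
          Real.exp (ω * r ^ 2 * Real.tanh (ω * t) / (2 * θ ^ 2)) *
          (r * ω * Real.tanh (ω * t) / θ ^ 2 *
              η (Real.tanh (ω * t) / ω, r / Real.cosh (ω * t)) +
            fderiv ℝ η (Real.tanh (ω * t) / ω, r / Real.cosh (ω * t)) (0, 1) /
              Real.cosh (ω * t)) := funext hPQ
    rw [he]; exact hQ2.deriv
  have hPT : partialT ηV t q =
      Real.cosh (ω * t) ^ (-(1 : ℝ) / 2) *
        Real.exp (ω * q ^ 2 * Real.tanh (ω * t) / (2 * θ ^ 2)) *
        (-(ω / 2) * Real.tanh (ω * t) * η (Real.tanh (ω * t) / ω, q / Real.cosh (ω * t)) +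
          ω ^ 2 * q ^ 2 / (2 * θ ^ 2 * Real.cosh (ω * t) ^ 2) *
            η (Real.tanh (ω * t) / ω, q / Real.cosh (ω * t)) +
          1 / Real.cosh (ω * t) ^ 2 *
            fderiv ℝ η (Real.tanh (ω * t) / ω, q / Real.cosh (ω * t)) (1, 0) +
          -(q * ω * Real.tanh (ω * t) / Real.cosh (ω * t)) *
            fderiv ℝ η (Real.tanh (ω * t) / ω, q / Real.cosh (ω * t)) (0, 1)) := by
    unfold partialT; exact hVt.deriv
  rw [hPT, hPQQ, hηV t q]
  exact algebra_final θ ω q (Real.cosh (ω * t)) (Real.tanh (ω * t))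
    (Real.cosh (ω * t) ^ (-(1 : ℝ) / 2))
    (Real.exp (ω * q ^ 2 * Real.tanh (ω * t) / (2 * θ ^ 2)))
    (η (Real.tanh (ω * t) / ω, q / Real.cosh (ω * t)))
    (fderiv ℝ η (Real.tanh (ω * t) / ω, q / Real.cosh (ω * t)) (0, 1))
    (fderiv ℝ (fderiv ℝ η) (Real.tanh (ω * t) / ω, q / Real.cosh (ω * t)) (0, 1) (0, 1))
    (fderiv ℝ η (Real.tanh (ω * t) / ω, q / Real.cosh (ω * t)) (1, 0))
    hθ' hc (hfree2 (Real.tanh (ω * t) / ω) (q / Real.cosh (ω * t))) hth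
end

section
/- Let θ > 0 and ω ≠ 0 be real numbers. Suppose η : ℝ × ℝ → ℝ is twice continuously differentiable, everywhere strictly positive, and satisfies θ² ∂η/∂t (t,q) = -(θ⁴/2) ∂²η/∂q² (t,q) for all (t,q). Define the free drift B̃(t,q) = θ² (∂η/∂q (t,q))/η(t,q), let η^V(t,q) = cosh(ωt)^{-1/2} · exp( ω q² tanh(ωt)/(2θ²) ) · η( tanh(ωt)/ω , q/cosh(ωt) ), and define B̃_V(t,q) = θ² (∂η^V/∂q (t,q))/η^V(t,q). Then for all (t,q) ∈ ℝ × ℝ, B̃_V(t,q) = ω q tanh(ωt) + (1/cosh(ωt)) · B̃( tanh(ωt)/ω , q/cosh(ωt) ). -/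
/-- for a strictly positive `C²` solution `η` of the free backward heat
equation with free drift `B̃ = θ² η_q/η`, the drift of
`η^V(t,q) = cosh(ωt)^{-1/2} exp(ωq² tanh(ωt)/(2θ²)) η(tanh(ωt)/ω, q/cosh(ωt))` is
`B̃_V(t,q) = ωq tanh(ωt) + (1/cosh(ωt)) B̃(tanh(ωt)/ω, q/cosh(ωt))`. -/
theorem drift_quadratic_potential (θ ω : ℝ) (hθ : 0 < θ) (hω : ω ≠ 0) (η : ℝ × ℝ → ℝ)
    (hη : ContDiff ℝ 2 η) (hpos : ∀ p : ℝ × ℝ, 0 < η p)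
    (hfree : ∀ t q : ℝ, θ ^ 2 * partialT η t q = -(θ ^ 4 / 2) * partialQQ η t q)
    (B : ℝ → ℝ → ℝ) (hB : ∀ t q : ℝ, B t q = θ ^ 2 * partialQ η t q / η (t, q))
    (ηV : ℝ × ℝ → ℝ)
    (hηV : ∀ t q : ℝ,
      ηV (t, q) = Real.cosh (ω * t) ^ (-(1 : ℝ) / 2) *
        Real.exp (ω * q ^ 2 * Real.tanh (ω * t) / (2 * θ ^ 2)) *
        η (Real.tanh (ω * t) / ω, q / Real.cosh (ω * t)))
    (BV : ℝ → ℝ → ℝ) (hBV : ∀ t q : ℝ, BV t q = θ ^ 2 * partialQ ηV t q / ηV (t, q)) :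
    ∀ t q : ℝ,
      BV t q = ω * q * Real.tanh (ω * t) +
        (1 / Real.cosh (ω * t)) * B (Real.tanh (ω * t) / ω) (q / Real.cosh (ω * t)) := by

  intro t q
  set c := Real.cosh (ω * t) with hc
  have hcpos : 0 < c := Real.cosh_pos (ω * t)
  set T := Real.tanh (ω * t) / ω with hT
  set C := c ^ (-(1 : ℝ) / 2) with hC
  have hCpos : 0 < C := Real.rpow_pos_of_pos hcpos _
  have hdiff : Differentiable ℝ η := hη.differentiable (by simp)
  -- derivative of r ↦ η (T, r) at any point
  have hg : ∀ x : ℝ, HasDerivAt (fun r => η (T, r)) (partialQ η T x) x := by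
    intro x
    have : DifferentiableAt ℝ (fun r : ℝ => η (T, r)) x := by
      exact (hdiff (T, x)).comp x (by fun_prop)
    exact this.hasDerivAt
  -- derivative of r ↦ η (T, r / c)
  have hgc : HasDerivAt (fun r => η (T, r / c)) (partialQ η T (q / c) * (1 / c)) q := by
    have h1 : HasDerivAt (fun r : ℝ => r / c) (1 / c) q := by
      simpa using (hasDerivAt_id q).div_const c
    exact (hg (q / c)).comp q h1
  -- derivative of the exponential factor
  have hexp : HasDerivAt (fun r => Real.exp (ω * r ^ 2 * Real.tanh (ω * t) / (2 * θ ^ 2)))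
      (Real.exp (ω * q ^ 2 * Real.tanh (ω * t) / (2 * θ ^ 2)) *
        (ω * (2 * q) * Real.tanh (ω * t) / (2 * θ ^ 2))) q := by
    have hu : HasDerivAt (fun r : ℝ => ω * r ^ 2 * Real.tanh (ω * t) / (2 * θ ^ 2))
        (ω * (2 * q) * Real.tanh (ω * t) / (2 * θ ^ 2)) q := by
      have : HasDerivAt (fun r : ℝ => r ^ 2) (2 * q) q := by
        simpa using (hasDerivAt_pow 2 q)
      have := ((this.const_mul ω).mul_const (Real.tanh (ω * t))).div_const (2 * θ ^ 2)
      convert this using 1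
    exact hu.exp
  set E := Real.exp (ω * q ^ 2 * Real.tanh (ω * t) / (2 * θ ^ 2)) with hE
  have hEpos : 0 < E := Real.exp_pos _
  have hmain : HasDerivAt (fun r => C * (Real.exp (ω * r ^ 2 * Real.tanh (ω * t) / (2 * θ ^ 2)) *
      η (T, r / c)))
      (C * ((E * (ω * (2 * q) * Real.tanh (ω * t) / (2 * θ ^ 2))) * η (T, q / c) +
        E * (partialQ η T (q / c) * (1 / c)))) q := by
    exact (hexp.mul hgc).const_mul C
  have hfun : (fun r => ηV (t, r)) = fun r =>
      C * (Real.exp (ω * r ^ 2 * Real.tanh (ω * t) / (2 * θ ^ 2)) * η (T, r / c)) := by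
    funext r
    rw [hηV t r]; ring
  have hderiv : partialQ ηV t q =
      C * ((E * (ω * (2 * q) * Real.tanh (ω * t) / (2 * θ ^ 2))) * η (T, q / c) +
        E * (partialQ η T (q / c) * (1 / c))) := by
    rw [partialQ, hfun]
    exact hmain.deriv
  have hηVval : ηV (t, q) = C * E * η (T, q / c) := by rw [hηV t q]
  have hηpos : 0 < η (T, q / c) := hpos _
  rw [hBV, hderiv, hηVval, hB]
  have hθ2 : θ ^ 2 ≠ 0 := pow_ne_zero 2 hθ.ne'
  field_simp
end

section
/- Let θ > 0 and β ≠ 0 be real numbers. Suppose η : ℝ × ℝ → ℝ is twice continuously differentiable and satisfies the free backward heat equation ∂η/∂t (t,q) = -(θ²/2) ∂²η/∂q² (t,q) for all (t,q) ∈ ℝ × ℝ. Define η^V(t,q) = η( (e^{2βt} - 1)/(2β) , e^{βt} q ). Then η^V satisfies the backward heat equation with drift term D(q) = βq, namely ∂η^V/∂t (t,q) = -(θ²/2) ∂²η^V/∂q² (t,q) + β q · ∂η^V/∂q (t,q) for all (t,q) ∈ ℝ × ℝ. -/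
/-- Slice derivative in the space variable: derivative of `r ↦ f (t, a*r+c)`. -/
lemma sliceQ (f : ℝ × ℝ → ℝ) (hf : Differentiable ℝ f) (t a c q : ℝ) :
    HasDerivAt (fun r => f (t, a * r + c)) (a * fderiv ℝ f (t, a * q + c) (0, 1)) q := by
  have hc : HasDerivAt (fun r : ℝ => ((t, a * r + c) : ℝ × ℝ)) ((0 : ℝ), a) q := by
    simpa using (hasDerivAt_const q t).prodMk (((hasDerivAt_id q).const_mul a).add_const c)
  have h := ((hf (t, a * q + c)).hasFDerivAt).comp_hasDerivAt q hc
  have e : ((0 : ℝ), a) = a • ((0 : ℝ), (1 : ℝ)) := by simp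
  rw [e, (fderiv ℝ f (t, a * q + c)).map_smul, smul_eq_mul] at h
  exact h

lemma sliceT (f : ℝ × ℝ → ℝ) (hf : Differentiable ℝ f) (t q : ℝ) :
    HasDerivAt (fun s => f (s, q)) (fderiv ℝ f (t, q) (1, 0)) t := by
  have hc : HasDerivAt (fun s : ℝ => ((s, q) : ℝ × ℝ)) ((1 : ℝ), (0 : ℝ)) t :=
    (hasDerivAt_id t).prodMk (hasDerivAt_const t q)
  exact ((hf (t, q)).hasFDerivAt).comp_hasDerivAt t hc

/-- from a `C²` solution `η` of the free backward heat equation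
`η_t = -(θ²/2) η_qq`, the function `η^V(t,q) = η((e^{2βt}-1)/(2β), e^{βt} q)` solves
the backward heat equation with drift term `D(q) = βq`:
`η^V_t = -(θ²/2) η^V_qq + βq η^V_q`. -/
theorem heat_with_drift (θ β : ℝ) (hθ : 0 < θ) (hβ : β ≠ 0) (η : ℝ × ℝ → ℝ)
    (hη : ContDiff ℝ 2 η)
    (hfree : ∀ t q : ℝ, partialT η t q = -(θ ^ 2 / 2) * partialQQ η t q)
    (ηV : ℝ × ℝ → ℝ)
    (hηV : ∀ t q : ℝ,
      ηV (t, q) = η ((Real.exp (2 * β * t) - 1) / (2 * β), Real.exp (β * t) * q)) :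
    ∀ t q : ℝ,
      partialT ηV t q = -(θ ^ 2 / 2) * partialQQ ηV t q + β * q * partialQ ηV t q := by
  intro t q
  have hη1 : Differentiable ℝ η := hη.differentiable (by norm_num)
  -- g = ∂η/∂q as a function, C¹ and differentiable
  set g : ℝ × ℝ → ℝ := fun p => fderiv ℝ η p (0, 1) with hgdef
  have hfC : ContDiff ℝ 1 (fun p => fderiv ℝ η p) := hη.fderiv_right (by norm_num)
  have hgd : Differentiable ℝ g :=
    (hfC.clm_apply contDiff_const).differentiable one_ne_zero
  -- A: partialQ η = g
  have hA : ∀ a b : ℝ, partialQ η a b = g (a, b) := by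
    intro a b
    have := (sliceQ η hη1 a 1 0 b).deriv
    simpa [partialQ, hgdef] using this
  -- B: partialQQ η in terms of fderiv of g
  have hB : ∀ a b : ℝ, partialQQ η a b = fderiv ℝ g (a, b) (0, 1) := by
    intro a b
    have hfun : (fun r => partialQ η a r) = fun r => g (a, 1 * r + 0) := by
      funext r; rw [hA a r]; norm_num
    have := (sliceQ g hgd a 1 0 b).deriv
    rw [partialQQ, hfun, this]; norm_num
  -- notation for the point
  set φ : ℝ := (Real.exp (2 * β * t) - 1) / (2 * β) with hφdef
  set ψ : ℝ := Real.exp (β * t) with hψdef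
  set p : ℝ × ℝ := (φ, ψ * q) with hpdef
  -- C: partialQ ηV t r = ψ * g (φ, ψ * r)
  have hC : ∀ r : ℝ, partialQ ηV t r = ψ * g (φ, ψ * r) := by
    intro r
    have hfun : (fun s => ηV (t, s)) = fun s => η (φ, ψ * s + 0) := by
      funext s; rw [hηV t s]; norm_num; rfl
    have := (sliceQ η hη1 φ ψ 0 r).deriv
    rw [partialQ, hfun, this]; norm_num [hgdef]
  -- D: partialQQ ηV
  have hD : partialQQ ηV t q = ψ * (ψ * fderiv ℝ g p (0, 1)) := by
    have hfun : (fun r => partialQ ηV t r) = fun r => ψ * g (φ, ψ * r + 0) := by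
      funext r; rw [hC r]; norm_num
    have hd := ((sliceQ g hgd φ ψ 0 q).const_mul ψ).deriv
    rw [partialQQ, hfun, hd, hpdef]; ring_nf
  -- E: partialT ηV via the chain rule along the curve s ↦ (φ(s), ψ(s) q)
  have hcurve : HasDerivAt (fun s : ℝ => ((Real.exp (2 * β * s) - 1) / (2 * β),
      Real.exp (β * s) * q) : ℝ → ℝ × ℝ)
      ((Real.exp (2 * β * t), β * Real.exp (β * t) * q) : ℝ × ℝ) t := by
    have h1 : HasDerivAt (fun s : ℝ => 2 * β * s) (2 * β) t := by
      simpa using (hasDerivAt_id t).const_mul (2 * β)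
    have h2 : HasDerivAt (fun s : ℝ => (Real.exp (2 * β * s) - 1) / (2 * β))
        (Real.exp (2 * β * t) * (2 * β) / (2 * β)) t := (h1.exp.sub_const 1).div_const (2 * β)
    have h2' : Real.exp (2 * β * t) * (2 * β) / (2 * β) = Real.exp (2 * β * t) := by
      field_simp
    rw [h2'] at h2
    have h3 : HasDerivAt (fun s : ℝ => β * s) β t := by
      simpa using (hasDerivAt_id t).const_mul β
    have h4 : HasDerivAt (fun s : ℝ => Real.exp (β * s) * q)
        (Real.exp (β * t) * β * q) t := (h3.exp.mul_const q)
    have h4' : Real.exp (β * t) * β * q = β * Real.exp (β * t) * q := by ring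
    rw [h4'] at h4
    exact h2.prodMk h4
  have hE : partialT ηV t q
      = Real.exp (2 * β * t) * fderiv ℝ η p (1, 0) + β * ψ * q * g p := by
    have hcomp := ((hη1 p).hasFDerivAt).comp_hasDerivAt t hcurve
    have hfun : (fun s => ηV (s, q)) = fun s =>
        η ((Real.exp (2 * β * s) - 1) / (2 * β), Real.exp (β * s) * q) := by
      funext s; exact hηV s q
    have hlin : ((Real.exp (2 * β * t), β * Real.exp (β * t) * q) : ℝ × ℝ)
        = Real.exp (2 * β * t) • ((1 : ℝ), (0 : ℝ))
          + (β * Real.exp (β * t) * q) • ((0 : ℝ), (1 : ℝ)) := by simp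
    have := hcomp.deriv
    rw [partialT, hfun]
    rw [show (fun s => η ((Real.exp (2 * β * s) - 1) / (2 * β), Real.exp (β * s) * q))
        = η ∘ (fun s : ℝ => (((Real.exp (2 * β * s) - 1) / (2 * β),
          Real.exp (β * s) * q) : ℝ × ℝ)) from rfl, this, hlin,
      (fderiv ℝ η p).map_add, (fderiv ℝ η p).map_smul, (fderiv ℝ η p).map_smul]
    simp [hgdef, hψdef, smul_eq_mul]; try ring
  -- use the free heat equation at p
  have hfree' : fderiv ℝ η p (1, 0) = -(θ ^ 2 / 2) * fderiv ℝ g p (0, 1) := by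
    have h1 : partialT η φ (ψ * q) = fderiv ℝ η p (1, 0) := by
      rw [partialT, (sliceT η hη1 φ (ψ * q)).deriv, hpdef]
    rw [← h1, hfree φ (ψ * q), hB φ (ψ * q)]
  -- put everything together
  rw [hE, hD, hC q, hfree']
  have hexp : Real.exp (2 * β * t) = ψ * ψ := by
    rw [hψdef, ← Real.exp_add]; ring_nf
  rw [hexp]; ring
end

section
/- Let θ > 0, λ ∈ ℝ, and suppose η : ℝ × ℝ → ℝ is twice continuously differentiable, everywhere strictly positive, and satisfies the free backward heat equation θ² ∂η/∂t (t,q) = -(θ⁴/2) ∂²η/∂q² (t,q) for all (t,q). Let η^V(t,q) = exp(-λ² t³/(6θ²)) · exp(λ t q/θ²) · η(t, q - λ t²/2), let B̃(t,q) = θ² (∂η/∂q (t,q))/η(t,q) and B̃_V(t,q) = θ² (∂η^V/∂q (t,q))/η^V(t,q). If y : ℝ → ℝ is differentiable and z_V : ℝ → ℝ is defined by z_V(t) = y(t) + λ t²/2, then y satisfies the ordinary differential equation y'(t) = B̃(t, y(t)) for all t if and only if z_V satisfies z_V'(t) = B̃_V(t, z_V(t)) for all t. -/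
/-- deterministic form of the translation `z_V = z + λt²/2`:
with `η > 0` a `C²` solution of the free backward heat equation, free drift
`B̃ = θ² η_q/η`, `η^V(t,q) = exp(-λ²t³/(6θ²)) exp(λtq/θ²) η(t, q - λt²/2)` and
perturbed drift `B̃_V = θ² η^V_q/η^V`, a differentiable `y` solves
`y' (t) = B̃(t, y(t))` for all `t` iff `z_V(t) = y(t) + λt²/2` solves
`z_V'(t) = B̃_V(t, z_V(t))` for all `t`. -/
theorem bernstein_translation_linear_potential (θ : ℝ) (hθ : 0 < θ) (lam : ℝ)
    (η : ℝ × ℝ → ℝ) (hη : ContDiff ℝ 2 η) (hpos : ∀ p : ℝ × ℝ, 0 < η p)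
    (hfree : ∀ t q : ℝ, θ ^ 2 * partialT η t q = -(θ ^ 4 / 2) * partialQQ η t q)
    (ηV : ℝ × ℝ → ℝ)
    (hηV : ∀ t q : ℝ,
      ηV (t, q) = Real.exp (-lam ^ 2 * t ^ 3 / (6 * θ ^ 2)) *
        Real.exp (lam * t * q / θ ^ 2) * η (t, q - lam * t ^ 2 / 2))
    (B : ℝ → ℝ → ℝ) (hB : ∀ t q : ℝ, B t q = θ ^ 2 * partialQ η t q / η (t, q))
    (BV : ℝ → ℝ → ℝ) (hBV : ∀ t q : ℝ, BV t q = θ ^ 2 * partialQ ηV t q / ηV (t, q))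
    (y : ℝ → ℝ) (hy : Differentiable ℝ y)
    (zV : ℝ → ℝ) (hzV : ∀ t : ℝ, zV t = y t + lam * t ^ 2 / 2) :
    (∀ t : ℝ, deriv y t = B t (y t)) ↔ (∀ t : ℝ, deriv zV t = BV t (zV t)) := by
  have hθ2 : (θ:ℝ)^2 ≠ 0 := pow_ne_zero 2 hθ.ne'
  have hηdiff : Differentiable ℝ η := hη.differentiable (by norm_num)
  have hq : ∀ t : ℝ, Differentiable ℝ (fun r => η (t, r)) := fun t =>
    hηdiff.comp (Differentiable.prodMk (differentiable_const t) differentiable_id)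
  -- key: BV t q = lam*t + B t (q - lam*t^2/2)
  have key : ∀ t q : ℝ, BV t q = lam * t + B t (q - lam * t ^ 2 / 2) := by
    intro t q
    set c := lam * t ^ 2 / 2 with hc
    set A := Real.exp (-lam ^ 2 * t ^ 3 / (6 * θ ^ 2)) with hA
    set E := Real.exp (lam * t * q / θ ^ 2) with hE
    have h1 : HasDerivAt (fun r : ℝ => Real.exp (lam * t * r / θ ^ 2))
        (lam * t / θ ^ 2 * E) q := by
      have hlin : HasDerivAt (fun r : ℝ => lam * t * r / θ ^ 2) (lam * t / θ ^ 2) q := by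
        have hfun : (fun r : ℝ => lam * t * r / θ ^ 2) = fun r : ℝ => lam * t / θ ^ 2 * r := by
          funext r; ring
        rw [hfun]
        simpa using (hasDerivAt_id q).const_mul (lam * t / θ ^ 2)
      simpa [hE, mul_comm] using hlin.exp
    have h2 : HasDerivAt (fun r : ℝ => η (t, r - c)) (partialQ η t (q - c)) q := by
      have hb : HasDerivAt (fun r : ℝ => r - c) 1 q := (hasDerivAt_id q).sub_const c
      have ha : HasDerivAt (fun r : ℝ => η (t, r)) (partialQ η t (q - c)) (q - c) :=
        ((hq t) (q - c)).hasDerivAt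
      simpa using ha.comp_sub_const q c
    have h3 : HasDerivAt (fun r : ℝ => ηV (t, r))
        (A * (lam * t / θ ^ 2 * E) * η (t, q - c) + A * E * partialQ η t (q - c)) q := by
      have := ((h1.const_mul A).mul h2)
      have heq : (fun r : ℝ => ηV (t, r)) =
          fun r : ℝ => A * Real.exp (lam * t * r / θ ^ 2) * η (t, r - c) := by
        funext r; rw [hηV t r]
      rw [heq]
      convert this using 1 <;> rfl
    have hpq : partialQ ηV t q =
        A * (lam * t / θ ^ 2 * E) * η (t, q - c) + A * E * partialQ η t (q - c) := by
      simpa [partialQ] using h3.deriv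
    have hηVval : ηV (t, q) = A * E * η (t, q - c) := hηV t q
    have hHpos : 0 < η (t, q - c) := hpos _
    have hApos : 0 < A := Real.exp_pos _
    have hEpos : 0 < E := Real.exp_pos _
    rw [hBV, hB, hpq, hηVval]
    field_simp
  have hzVdiff : ∀ t : ℝ, HasDerivAt zV (deriv y t + lam * t) t := by
    intro t
    have h1 : HasDerivAt (fun s : ℝ => lam * s ^ 2 / 2) (lam * t) t := by
      have := ((hasDerivAt_pow 2 t).const_mul lam).div_const 2
      refine this.congr_deriv ?_
      push_cast
      ring
    have h2 : HasDerivAt y (deriv y t) t := (hy t).hasDerivAt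
    have : HasDerivAt (fun s => y s + lam * s ^ 2 / 2) (deriv y t + lam * t) t := h2.add h1
    have heq : zV = fun s => y s + lam * s ^ 2 / 2 := funext hzV
    rw [heq]; exact this
  constructor
  · intro h t
    rw [(hzVdiff t).deriv, key, hzV, h t]
    ring_nf
  · intro h t
    have := h t
    rw [(hzVdiff t).deriv, key, hzV] at this
    have h2 : deriv y t + lam * t = lam * t + B t (y t) := by
      convert this using 3; ring
    linarith [h2]
end
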